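/- Let ℓ ≥ 1 and let M₁, M₂, M₃ be real symmetric ℓ×ℓ matrices. If the set B(M₁,M₂,M₃) is nonempty, then it contains an element of rank at most φ(ℓ). -/

import Mathlib

open Matrix

noncomputable section

/-- Feasibility predicate for the set in Definition of `φ`. -/
def phiFeas (l : ℕ) (U : Matrix (Fin (2*l)) (Fin l) ℝ)
    (M : Matrix (Fin l) (Fin l) ℝ)
    (Y : Matrix (Fin (2*l)) (Fin (2*l)) ℝ) : Prop :=
  Y.PosSemidef ∧ Uᵀ * Y * U = M ∧
  (∀ i j : Fin l, Y ⟨(i : ℕ), by omega⟩ ⟨(j : ℕ), by omega⟩ = if i = j then (1:ℝ) else 0) ∧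
  (∀ i j : Fin l, Y ⟨l + (i : ℕ), by omega⟩ ⟨l + (j : ℕ), by omega⟩ = if i = j then (1:ℝ) else 0)

/-- `φ(ℓ)`. -/
def phi (l : ℕ) : ℕ :=
  sInf {k : ℕ |
    ∀ (U : Matrix (Fin (2*l)) (Fin l) ℝ) (M : Matrix (Fin l) (Fin l) ℝ),
      M.IsSymm → (∃ Y, phiFeas l U M Y) → ∃ Y, phiFeas l U M Y ∧ Y.rank ≤ k}

/-- The `3ℓ×ℓ` block matrix `[I_ℓ; I_ℓ; −I_ℓ]`. -/
def Wmat (l : ℕ) : Matrix (Fin (3*l)) (Fin l) ℝ :=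
  Matrix.of fun i j =>
    (if (i : ℕ) = (j : ℕ) then 1 else 0) + (if (i : ℕ) = l + (j : ℕ) then 1 else 0)
      - (if (i : ℕ) = 2*l + (j : ℕ) then 1 else 0)

/-- Membership in the set `B(M₁,M₂,M₃)`. -/
def Bset (l : ℕ) (M1 M2 M3 : Matrix (Fin l) (Fin l) ℝ)
    (X : Matrix (Fin (3*l)) (Fin (3*l)) ℝ) : Prop :=
  X.PosSemidef ∧
  (∀ i j : Fin l, X ⟨(i : ℕ), by omega⟩ ⟨(j : ℕ), by omega⟩ = M1 i j) ∧
  (∀ i j : Fin l, X ⟨l + (i : ℕ), by omega⟩ ⟨l + (j : ℕ), by omega⟩ = M2 i j) ∧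
  (∀ i j : Fin l, X ⟨2*l + (i : ℕ), by omega⟩ ⟨2*l + (j : ℕ), by omega⟩ = M3 i j) ∧
  (Wmat l)ᵀ * X * (Wmat l) = 0




namespace BsetAux

lemma real_conjTranspose {α β : Type*} (A : Matrix α β ℝ) : Aᴴ = Aᵀ := by
  ext i j; simp [conjTranspose_apply]

lemma exists_pinv {n : Type*} [Fintype n] [DecidableEq n] {M : Matrix n n ℝ}
    (hM : M.PosSemidef) :
    ∃ R P Pi : Matrix n n ℝ,
      Rᵀ = R ∧ R * R = M ∧ Pᵀ = P ∧ R * P = Pi ∧ P * R = Pi ∧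
      Pi * R = R ∧ R * Pi = R ∧ Piᵀ = Pi ∧ Pi * Pi = Pi ∧ (1 - Pi).PosSemidef := by
  have hH : M.IsHermitian := hM.isHermitian
  set U : Matrix n n ℝ := ↑hH.eigenvectorUnitary with hUdef
  have hU2 : star U * U = 1 := Unitary.coe_star_mul_self hH.eigenvectorUnitary
  have hU1 : U * star U = 1 := Unitary.coe_mul_star_self hH.eigenvectorUnitary
  have hstar : star U = Uᵀ := by
    rw [Matrix.star_eq_conjTranspose, real_conjTranspose]
  set ev : n → ℝ := hH.eigenvalues with hevdef
  have key : ∀ f g : n → ℝ, (U * diagonal f * star U) * (U * diagonal g * star U)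
      = U * diagonal (fun i => f i * g i) * star U := by
    intro f g
    simp only [Matrix.mul_assoc]
    rw [← Matrix.mul_assoc (star U) U, hU2, Matrix.one_mul,
      ← Matrix.mul_assoc (diagonal f) (diagonal g), diagonal_mul_diagonal]
  have keyT : ∀ f : n → ℝ, (U * diagonal f * star U)ᵀ = U * diagonal f * star U := by
    intro f
    simp [transpose_mul, diagonal_transpose, hstar, transpose_transpose, Matrix.mul_assoc]
  have hMeq : U * diagonal ev * star U = M := by
    have h := hH.spectral_theorem
    have h2 : RCLike.ofReal ∘ ev = ev := by
      funext i; simp [RCLike.ofReal_real_eq_id]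
    rw [h2] at h
    exact h.symm
  have hevnn : ∀ i, 0 ≤ ev i := fun i => hM.eigenvalues_nonneg i
  have hsne : ∀ i, ev i ≠ 0 → Real.sqrt (ev i) ≠ 0 := by
    intro i h
    have := lt_of_le_of_ne (hevnn i) (Ne.symm h)
    positivity
  refine ⟨U * diagonal (fun i => Real.sqrt (ev i)) * star U,
    U * diagonal (fun i => if ev i = 0 then 0 else (Real.sqrt (ev i))⁻¹) * star U,
    U * diagonal (fun i => if ev i = 0 then (0:ℝ) else 1) * star U,
    keyT _, ?_, keyT _, ?_, ?_, ?_, ?_, keyT _, ?_, ?_⟩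
  · rw [key, show (fun i => Real.sqrt (ev i) * Real.sqrt (ev i)) = ev from
      funext fun i => Real.mul_self_sqrt (hevnn i)]
    exact hMeq
  · rw [key]; congr 1; congr 1; apply congrArg; funext i
    by_cases h : ev i = 0
    · simp [h]
    · simp [h, mul_inv_cancel₀ (hsne i h)]
  · rw [key]; congr 1; congr 1; apply congrArg; funext i
    by_cases h : ev i = 0
    · simp [h]
    · simp [h, inv_mul_cancel₀ (hsne i h)]
  · rw [key]; congr 1; congr 1; apply congrArg; funext i
    by_cases h : ev i = 0
    · simp [h]
    · simp [h]
  · rw [key]; congr 1; congr 1; apply congrArg; funext i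
    by_cases h : ev i = 0
    · simp [h]
    · simp [h]
  · rw [key]; congr 1; congr 1; apply congrArg; funext i
    by_cases h : ev i = 0 <;> simp [h]
  · have h1 : (1 : Matrix n n ℝ) = U * diagonal (fun _ => (1:ℝ)) * star U := by
      rw [diagonal_one, Matrix.mul_one, hU1]
    have hdiag : diagonal (fun _ => (1:ℝ)) - diagonal (fun i => if ev i = 0 then (0:ℝ) else 1)
        = diagonal (fun i => 1 - (if ev i = 0 then (0:ℝ) else 1)) := by
      ext i j
      rcases eq_or_ne i j with rfl | hne
      · simp
      · simp [diagonal_apply_ne _ hne, one_apply_ne hne]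
    have h2 : (1 : Matrix n n ℝ)
          - U * diagonal (fun i => if ev i = 0 then (0:ℝ) else 1) * star U
        = U * diagonal (fun i => 1 - (if ev i = 0 then (0:ℝ) else 1)) * star U := by
      rw [h1, ← Matrix.sub_mul, ← Matrix.mul_sub, hdiag]
    rw [h2]
    have hpsd : (diagonal (fun i => 1 - (if ev i = 0 then (0:ℝ) else 1))).PosSemidef := by
      refine posSemidef_diagonal_iff.mpr fun i => ?_
      by_cases h : ev i = 0 <;> simp [h]
    have := hpsd.mul_mul_conjTranspose_same U
    rwa [← Matrix.star_eq_conjTranspose] at this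

lemma psd_mul_eq_zero {m k : Type*} [Fintype m] [Fintype k] {Y : Matrix m m ℝ}
    (hY : Y.PosSemidef) {W : Matrix m k ℝ} (h : Wᵀ * Y * W = 0) : Y * W = 0 := by
  have key : ∀ j, Y *ᵥ (fun a => W a j) = 0 := by
    intro j
    apply (hY.dotProduct_mulVec_zero_iff _).mp
    have h0 : (Wᵀ * Y * W) j j = 0 := by rw [h]; rfl
    rw [Matrix.mul_assoc] at h0
    calc star (fun a => W a j) ⬝ᵥ Y *ᵥ (fun a => W a j)
        = ∑ a, W a j * (Y * W) a j := by
          simp [dotProduct, mulVec, mul_apply, Finset.mul_sum]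
      _ = (Wᵀ * (Y * W)) j j := by simp [mul_apply, transpose_apply]
      _ = 0 := h0
  ext i j
  have := congrFun (key j) i
  simpa [mulVec, dotProduct, mul_apply] using this

lemma posSemidef_blockDiag {m : Type*} [Fintype m] [DecidableEq m] {A D : Matrix m m ℝ}
    (hA : A.PosSemidef) (hD : D.PosSemidef) : (fromBlocks A 0 0 D).PosSemidef := by
  have hAt : Aᵀ = A := by
    have := hA.1; rwa [Matrix.IsHermitian, real_conjTranspose] at this
  have hDt : Dᵀ = D := by
    have := hD.1; rwa [Matrix.IsHermitian, real_conjTranspose] at this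
  refine PosSemidef.of_dotProduct_mulVec_nonneg ?_ ?_
  · show (fromBlocks A 0 0 D)ᴴ = _
    rw [real_conjTranspose, fromBlocks_transpose, hAt, hDt, transpose_zero]
  · intro x
    have hx : star x ⬝ᵥ (fromBlocks A 0 0 D) *ᵥ x =
        star (x ∘ Sum.inl) ⬝ᵥ A *ᵥ (x ∘ Sum.inl) + star (x ∘ Sum.inr) ⬝ᵥ D *ᵥ (x ∘ Sum.inr) := by
      simp [dotProduct, Fintype.sum_sum_type, mulVec, fromBlocks, Finset.mul_sum]
    rw [hx]
    exact add_nonneg (hA.dotProduct_mulVec_nonneg _) (hD.dotProduct_mulVec_nonneg _)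

lemma conj_submatrix {a b c : Type*} [Fintype a] [Fintype b] [Fintype c] [DecidableEq a]
    (e : b ≃ a) (Am : Matrix a c ℝ) (Bm : Matrix a a ℝ) :
    (Am.submatrix e id)ᵀ * Bm.submatrix e e * Am.submatrix e id = Amᵀ * Bm * Am := by
  rw [transpose_submatrix, submatrix_mul_equiv, submatrix_mul_equiv, submatrix_id_id]

end BsetAux

namespace BsetAux

def eq2 (l : ℕ) : (Fin l ⊕ Fin l) ≃ Fin (2*l) :=
  finSumFinEquiv.trans (finCongr (by omega))

def eq3 (l : ℕ) : ((Fin l ⊕ Fin l) ⊕ Fin l) ≃ Fin (3*l) :=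
  ((eq2 l).sumCongr (Equiv.refl (Fin l))).trans (finSumFinEquiv.trans (finCongr (by omega)))

lemma eq2_inl_val (l : ℕ) (i : Fin l) : ((eq2 l (Sum.inl i)) : ℕ) = i := by
  simp [eq2]

lemma eq2_inr_val (l : ℕ) (i : Fin l) : ((eq2 l (Sum.inr i)) : ℕ) = l + i := by
  simp [eq2]; omega

lemma eq3_ll_val (l : ℕ) (i : Fin l) : ((eq3 l (Sum.inl (Sum.inl i))) : ℕ) = i := by
  simp [eq3, eq2]

lemma eq3_lr_val (l : ℕ) (i : Fin l) : ((eq3 l (Sum.inl (Sum.inr i))) : ℕ) = l + i := by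
  simp [eq3, eq2]; omega

lemma eq3_r_val (l : ℕ) (i : Fin l) : ((eq3 l (Sum.inr i)) : ℕ) = 2*l + i := by
  simp [eq3, eq2]

lemma mk_e2_inl (l : ℕ) (i : Fin l) (p : ((i:ℕ) : ℕ) < 2*l) :
    (⟨(i:ℕ), p⟩ : Fin (2*l)) = eq2 l (Sum.inl i) := Fin.ext (eq2_inl_val l i).symm

lemma mk_e2_inr (l : ℕ) (i : Fin l) (p : l + (i:ℕ) < 2*l) :
    (⟨l + (i:ℕ), p⟩ : Fin (2*l)) = eq2 l (Sum.inr i) := Fin.ext (eq2_inr_val l i).symm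

lemma mk_e3_ll (l : ℕ) (i : Fin l) (p : (i:ℕ) < 3*l) :
    (⟨(i:ℕ), p⟩ : Fin (3*l)) = eq3 l (Sum.inl (Sum.inl i)) := Fin.ext (eq3_ll_val l i).symm

lemma mk_e3_lr (l : ℕ) (i : Fin l) (p : l + (i:ℕ) < 3*l) :
    (⟨l + (i:ℕ), p⟩ : Fin (3*l)) = eq3 l (Sum.inl (Sum.inr i)) := Fin.ext (eq3_lr_val l i).symm

lemma mk_e3_r (l : ℕ) (i : Fin l) (p : 2*l + (i:ℕ) < 3*l) :
    (⟨2*l + (i:ℕ), p⟩ : Fin (3*l)) = eq3 l (Sum.inr i) := Fin.ext (eq3_r_val l i).symm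

end BsetAux

namespace BsetAux

lemma Wmat_block (l : ℕ) :
    (Wmat l).submatrix (eq3 l) id
      = fromRows (fromRows (1 : Matrix (Fin l) (Fin l) ℝ) 1) (-1) := by
  ext a j
  rcases a with (a | a) | a
  · simp only [submatrix_apply, id_eq, Wmat, of_apply, fromRows_apply_inl]
    rw [eq3_ll_val]
    by_cases h : a = j
    · subst h
      rw [if_pos rfl, if_neg (by omega), if_neg (by omega)]
      simp [one_apply]
    · have h' : (a:ℕ) ≠ (j:ℕ) := fun hc => h (Fin.ext hc)
      rw [if_neg h', if_neg (by omega), if_neg (by omega)]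
      simp [one_apply, h]
  · simp only [submatrix_apply, id_eq, Wmat, of_apply, fromRows_apply_inl, fromRows_apply_inr]
    rw [eq3_lr_val]
    by_cases h : a = j
    · subst h
      rw [if_neg (by omega), if_pos rfl, if_neg (by omega)]
      simp [one_apply]
    · have h' : (a:ℕ) ≠ (j:ℕ) := fun hc => h (Fin.ext hc)
      rw [if_neg (by omega), if_neg (by omega), if_neg (by omega)]
      simp [one_apply, h]
  · simp only [submatrix_apply, id_eq, Wmat, of_apply, fromRows_apply_inr]
    rw [eq3_r_val]
    by_cases h : a = j
    · subst h
      rw [if_neg (by omega), if_neg (by omega), if_pos rfl]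
      simp [one_apply, neg_apply]
    · have h' : (a:ℕ) ≠ (j:ℕ) := fun hc => h (Fin.ext hc)
      rw [if_neg (by omega), if_neg (by omega), if_neg (by omega)]
      simp [one_apply, h, neg_apply]

end BsetAux

open BsetAux in
/-- If `B(M₁,M₂,M₃)` is nonempty, it contains an element of rank at most `φ(ℓ)`. -/
theorem Bset_exists_low_rank (l : ℕ) (hl : 1 ≤ l)
    (M1 M2 M3 : Matrix (Fin l) (Fin l) ℝ)
    (hM1 : M1.IsSymm) (hM2 : M2.IsSymm) (hM3 : M3.IsSymm)
    (h : ∃ X, Bset l M1 M2 M3 X) :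
    ∃ X, Bset l M1 M2 M3 X ∧ X.rank ≤ phi l := by
  classical
  obtain ⟨X, hXpsd, hX1, hX2, hX3, hXW⟩ := h
  have hM1' : M1ᵀ = M1 := hM1
  have hM2' : M2ᵀ = M2 := hM2
  -- φ(l) satisfies the defining property
  have hne : Set.Nonempty {k : ℕ |
      ∀ (U : Matrix (Fin (2*l)) (Fin l) ℝ) (M : Matrix (Fin l) (Fin l) ℝ),
        M.IsSymm → (∃ Y, phiFeas l U M Y) → ∃ Y, phiFeas l U M Y ∧ Y.rank ≤ k} := by
    refine ⟨2*l, fun U M _ hY => ?_⟩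
    obtain ⟨Y, hY⟩ := hY
    exact ⟨Y, hY, le_trans (Matrix.rank_le_card_width Y) (by simp)⟩
  have hmem : ∀ (U : Matrix (Fin (2*l)) (Fin l) ℝ) (M : Matrix (Fin l) (Fin l) ℝ),
      M.IsSymm → (∃ Y, phiFeas l U M Y) → ∃ Y, phiFeas l U M Y ∧ Y.rank ≤ phi l :=
    Nat.sInf_mem hne
  -- block form of X
  set Xb : Matrix ((Fin l ⊕ Fin l) ⊕ Fin l) ((Fin l ⊕ Fin l) ⊕ Fin l) ℝ :=
    X.submatrix (eq3 l) (eq3 l) with hXbdef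
  have hXbpsd : Xb.PosSemidef := hXpsd.submatrix _
  have hXbsym : ∀ a b, Xb a b = Xb b a := by
    intro a b
    have := congrFun (congrFun hXbpsd.1 b) a
    simpa [conjTranspose_apply] using this
  set Bm : Matrix (Fin l) (Fin l) ℝ :=
    Matrix.of (fun i j => Xb (Sum.inl (Sum.inl i)) (Sum.inl (Sum.inr j))) with hBmdef
  set Q : Matrix (Fin l ⊕ Fin l) (Fin l ⊕ Fin l) ℝ := fromBlocks M1 Bm Bmᵀ M2 with hQdef
  have hXM1 : ∀ i j : Fin l, Xb (Sum.inl (Sum.inl i)) (Sum.inl (Sum.inl j)) = M1 i j := by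
    intro i j
    have h9 := hX1 i j
    rw [mk_e3_ll, mk_e3_ll] at h9
    exact h9
  have hXM2 : ∀ i j : Fin l, Xb (Sum.inl (Sum.inr i)) (Sum.inl (Sum.inr j)) = M2 i j := by
    intro i j
    have h9 := hX2 i j
    rw [mk_e3_lr, mk_e3_lr] at h9
    exact h9
  have hXM3 : ∀ i j : Fin l, Xb (Sum.inr i) (Sum.inr j) = M3 i j := by
    intro i j
    have h9 := hX3 i j
    rw [mk_e3_r, mk_e3_r] at h9
    exact h9
  have hQelem : ∀ a b, Xb (Sum.inl a) (Sum.inl b) = Q a b := by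
    rintro (a | a) (b | b)
    · simpa [hQdef] using hXM1 a b
    · simp [hQdef, hBmdef]
    · rw [hXbsym]
      simp [hQdef, hBmdef]
    · simpa [hQdef] using hXM2 a b
  have hQpsd : Q.PosSemidef := by
    have hq : Q = Xb.submatrix Sum.inl Sum.inl := by
      ext a b; rw [submatrix_apply, hQelem]
    rw [hq]; exact hXbpsd.submatrix _
  have hQt : Qᵀ = Q := by
    rw [hQdef, fromBlocks_transpose, hM1', hM2', transpose_transpose]
  set J : Matrix (Fin l ⊕ Fin l) (Fin l) ℝ := fromRows 1 1 with hJdef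
  set Wb : Matrix ((Fin l ⊕ Fin l) ⊕ Fin l) (Fin l) ℝ := fromRows J (-1) with hWbdef
  have hWbeq : (Wmat l).submatrix (eq3 l) id = Wb := by
    rw [Wmat_block l, hWbdef, hJdef]
  have hWXW : Wbᵀ * Xb * Wb = 0 := by
    rw [← hWbeq, hXbdef, conj_submatrix (eq3 l) (Wmat l) X, hXW]
  have hXbW : Xb * Wb = 0 := psd_mul_eq_zero hXbpsd hWXW
  set T : Matrix (Fin l ⊕ Fin l) (Fin l) ℝ :=
    Matrix.of (fun a j => Xb (Sum.inl a) (Sum.inr j)) with hTdef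
  have hXbeq : Xb = fromBlocks Q T Tᵀ M3 := by
    ext a b
    rcases a with a | a <;> rcases b with b | b
    · simp only [fromBlocks_apply₁₁]; exact hQelem a b
    · simp only [fromBlocks_apply₁₂]; simp [hTdef]
    · simp only [fromBlocks_apply₂₁, transpose_apply]
      rw [hXbsym]; simp [hTdef]
    · simp only [fromBlocks_apply₂₂]; exact hXM3 a b
  have hmulW : fromRows (Q * J - T) (Tᵀ * J - M3) = (0 : Matrix _ _ ℝ) := by
    have h9 := hXbW
    rw [hXbeq, hWbdef, fromBlocks_mul_fromRows] at h9
    simpa [Matrix.mul_neg, Matrix.mul_one, sub_eq_add_neg] using h9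
  have hT : Q * J = T := by
    apply sub_eq_zero.mp
    ext a j
    have h9 := congrFun (congrFun hmulW (Sum.inl a)) j
    simpa using h9
  have hM3Q : Tᵀ * J = M3 := by
    apply sub_eq_zero.mp
    ext a j
    have h9 := congrFun (congrFun hmulW (Sum.inr a)) j
    simpa using h9
  have hTt : Tᵀ = Jᵀ * Q := by
    rw [← hT, transpose_mul, hQt]
  have hM3J : Jᵀ * Q * J = M3 := by
    rw [← hM3Q, hTt]
  -- M1, M2 are psd
  have hM1psd : M1.PosSemidef := by
    have hq : M1 = Xb.submatrix (fun i : Fin l => Sum.inl (Sum.inl i))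
        (fun i : Fin l => Sum.inl (Sum.inl i)) := by
      ext i j; rw [submatrix_apply]; exact (hXM1 i j).symm
    rw [hq]; exact hXbpsd.submatrix _
  have hM2psd : M2.PosSemidef := by
    have hq : M2 = Xb.submatrix (fun i : Fin l => Sum.inl (Sum.inr i))
        (fun i : Fin l => Sum.inl (Sum.inr i)) := by
      ext i j; rw [submatrix_apply]; exact (hXM2 i j).symm
    rw [hq]; exact hXbpsd.submatrix _
  obtain ⟨R1, P1, Pi1, hR1t, hR1sq, hP1t, hRP1, hPR1, hPiR1, hRPi1, hPi1t, hPi1sq, hPi1psd⟩ :=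
    exists_pinv hM1psd
  obtain ⟨R2, P2, Pi2, hR2t, hR2sq, hP2t, hRP2, hPR2, hPiR2, hRPi2, hPi2t, hPi2sq, hPi2psd⟩ :=
    exists_pinv hM2psd
  have hPi1t' : (1 - Pi1)ᵀ = 1 - Pi1 := by rw [transpose_sub, transpose_one, hPi1t]
  have hPi2t' : (1 - Pi2)ᵀ = 1 - Pi2 := by rw [transpose_sub, transpose_one, hPi2t]
  have hM1Pi : M1 * (1 - Pi1) = 0 := by
    have h5 : R1 * (1 - Pi1) = 0 := by
      rw [Matrix.mul_sub, Matrix.mul_one, hRPi1, sub_self]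
    rw [← hR1sq, Matrix.mul_assoc, h5, Matrix.mul_zero]
  have hM2Pi : M2 * (1 - Pi2) = 0 := by
    have h5 : R2 * (1 - Pi2) = 0 := by
      rw [Matrix.mul_sub, Matrix.mul_one, hRPi2, sub_self]
    rw [← hR2sq, Matrix.mul_assoc, h5, Matrix.mul_zero]
  -- kernel relations
  have hKer1 : Bmᵀ * (1 - Pi1) = 0 := by
    have hV1c : (fromBlocks (1 - Pi1) 0 0 (0 : Matrix (Fin l) (Fin l) ℝ))ᵀ * Q *
        (fromBlocks (1 - Pi1) 0 0 0) = 0 := by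
      rw [fromBlocks_transpose, hPi1t', hQdef, fromBlocks_multiply, fromBlocks_multiply]
      simp only [Matrix.zero_mul, Matrix.mul_zero, add_zero, zero_add, transpose_zero]
      rw [Matrix.mul_assoc, hM1Pi, Matrix.mul_zero, fromBlocks_zero]
    have h9 := psd_mul_eq_zero hQpsd hV1c
    rw [hQdef, fromBlocks_multiply] at h9
    ext i j
    have h7 := congrFun (congrFun h9 (Sum.inr i)) (Sum.inl j)
    simpa using h7
  have hKer2 : Bm * (1 - Pi2) = 0 := by
    have hV2c : (fromBlocks (0 : Matrix (Fin l) (Fin l) ℝ) 0 0 (1 - Pi2))ᵀ * Q *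
        (fromBlocks 0 0 0 (1 - Pi2)) = 0 := by
      rw [fromBlocks_transpose, hPi2t', hQdef, fromBlocks_multiply, fromBlocks_multiply]
      simp only [Matrix.zero_mul, Matrix.mul_zero, add_zero, zero_add, transpose_zero]
      rw [Matrix.mul_assoc, hM2Pi, Matrix.mul_zero, fromBlocks_zero]
    have h9 := psd_mul_eq_zero hQpsd hV2c
    rw [hQdef, fromBlocks_multiply] at h9
    ext i j
    have h7 := congrFun (congrFun h9 (Sum.inl i)) (Sum.inr j)
    simpa using h7
  have hBtPi : Bmᵀ * Pi1 = Bmᵀ := by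
    have h9 := hKer1
    rw [Matrix.mul_sub, Matrix.mul_one] at h9
    have := sub_eq_zero.mp h9
    exact this.symm
  have hPiB : Pi1 * Bm = Bm := by
    have h9 := congrArg Matrix.transpose hBtPi
    rwa [transpose_mul, hPi1t, transpose_transpose] at h9
  have hBPi : Bm * Pi2 = Bm := by
    have h9 := hKer2
    rw [Matrix.mul_sub, Matrix.mul_one] at h9
    have := sub_eq_zero.mp h9
    exact this.symm
  have hPi2Bt : Pi2 * Bmᵀ = Bmᵀ := by
    have h9 := congrArg Matrix.transpose hBPi
    rwa [transpose_mul, hPi2t] at h9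
  -- the normalized matrix Z0
  set Sp : Matrix (Fin l ⊕ Fin l) (Fin l ⊕ Fin l) ℝ := fromBlocks P1 0 0 P2 with hSpdef
  have hSpt : Spᵀ = Sp := by rw [hSpdef, fromBlocks_transpose, hP1t, hP2t, transpose_zero]
  set Z0 : Matrix (Fin l ⊕ Fin l) (Fin l ⊕ Fin l) ℝ :=
    Sp * Q * Sp + fromBlocks (1 - Pi1) 0 0 (1 - Pi2) with hZ0def
  have hZ0psd : Z0.PosSemidef := by
    refine Matrix.PosSemidef.add ?_ (posSemidef_blockDiag hPi1psd hPi2psd)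
    have h9 := hQpsd.mul_mul_conjTranspose_same Sp
    rwa [real_conjTranspose, hSpt] at h9
  have hPMP1 : P1 * M1 * P1 = Pi1 := by
    rw [← hR1sq, ← Matrix.mul_assoc, hPR1, Matrix.mul_assoc, hRP1, hPi1sq]
  have hPMP2 : P2 * M2 * P2 = Pi2 := by
    rw [← hR2sq, ← Matrix.mul_assoc, hPR2, Matrix.mul_assoc, hRP2, hPi2sq]
  have hZ0eq : Z0 = fromBlocks 1 (P1 * Bm * P2) (P2 * Bmᵀ * P1) 1 := by
    rw [hZ0def, hSpdef, hQdef, fromBlocks_multiply, fromBlocks_multiply, fromBlocks_add]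
    simp only [Matrix.zero_mul, Matrix.mul_zero, add_zero, zero_add]
    have e11 : P1 * M1 * P1 + (1 - Pi1) = 1 := by rw [hPMP1]; abel
    have e22 : P2 * M2 * P2 + (1 - Pi2) = 1 := by rw [hPMP2]; abel
    rw [e11, e22]
  set Ub : Matrix (Fin l ⊕ Fin l) (Fin l) ℝ := fromRows R1 R2 with hUbdef
  have hUbZ : Ubᵀ * Z0 * Ub = M3 := by
    rw [hZ0eq, hUbdef, transpose_fromRows, hR1t, hR2t, fromCols_mul_fromBlocks,
      fromCols_mul_fromRows, Matrix.mul_one, Matrix.mul_one, Matrix.add_mul, Matrix.add_mul]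
    have e1 : R2 * (P2 * Bmᵀ * P1) * R1 = Bmᵀ := by
      have : R2 * (P2 * Bmᵀ * P1) * R1 = (R2 * P2) * Bmᵀ * (P1 * R1) := by
        simp only [Matrix.mul_assoc]
      rw [this, hRP2, hPR1, hPi2Bt, hBtPi]
    have e2 : R1 * (P1 * Bm * P2) * R2 = Bm := by
      have : R1 * (P1 * Bm * P2) * R2 = (R1 * P1) * Bm * (P2 * R2) := by
        simp only [Matrix.mul_assoc]
      rw [this, hRP1, hPR2, hPiB, hBPi]
    rw [e1, e2, hR1sq, hR2sq, ← hM3J, hJdef, hQdef, transpose_fromRows, transpose_one,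
      fromCols_mul_fromBlocks, fromCols_mul_fromRows]
    simp only [Matrix.one_mul, Matrix.mul_one]
  -- transfer to Fin (2*l)
  set Uf : Matrix (Fin (2*l)) (Fin l) ℝ := Ub.submatrix (eq2 l).symm id with hUfdef
  set Yf : Matrix (Fin (2*l)) (Fin (2*l)) ℝ := Z0.submatrix (eq2 l).symm (eq2 l).symm with hYfdef
  have hfeas : phiFeas l Uf M3 Yf := by
    refine ⟨hZ0psd.submatrix _, ?_, ?_, ?_⟩
    · rw [hUfdef, hYfdef, conj_submatrix ((eq2 l).symm) Ub Z0, hUbZ]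
    · intro i j
      rw [mk_e2_inl, mk_e2_inl]
      simp [hYfdef, hZ0eq, Equiv.symm_apply_apply, one_apply]
    · intro i j
      rw [mk_e2_inr, mk_e2_inr]
      simp [hYfdef, hZ0eq, Equiv.symm_apply_apply, one_apply]
  obtain ⟨Yl, ⟨hYlpsd, hYlU, hYl11, hYl22⟩, hYlrank⟩ := hmem Uf M3 hM3 ⟨Yf, hfeas⟩
  -- back to block form
  set Zb : Matrix (Fin l ⊕ Fin l) (Fin l ⊕ Fin l) ℝ := Yl.submatrix (eq2 l) (eq2 l) with hZbdef
  have hZbpsd : Zb.PosSemidef := hYlpsd.submatrix _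
  have hZbsym : ∀ a b, Zb a b = Zb b a := by
    intro a b
    have := congrFun (congrFun hZbpsd.1 b) a
    simpa [conjTranspose_apply] using this
  set G : Matrix (Fin l) (Fin l) ℝ :=
    Matrix.of (fun i j => Zb (Sum.inl i) (Sum.inr j)) with hGdef
  have hZbeq : Zb = fromBlocks 1 G Gᵀ 1 := by
    ext a b
    rcases a with a | a <;> rcases b with b | b
    · have h9 := hYl11 a b
      rw [mk_e2_inl, mk_e2_inl] at h9
      simp only [fromBlocks_apply₁₁, one_apply]
      exact h9
    · simp [hGdef]
    · rw [hZbsym]; simp [hGdef]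
    · have h9 := hYl22 a b
      rw [mk_e2_inr, mk_e2_inr] at h9
      simp only [fromBlocks_apply₂₂, one_apply]
      exact h9
  have hUbeq : Uf.submatrix (eq2 l) id = Ub := by
    rw [hUfdef]; ext a j; simp
  have hZbU : Ubᵀ * Zb * Ub = M3 := by
    rw [← hUbeq, hZbdef, conj_submatrix (eq2 l) Uf Yl, hYlU]
  -- scale back
  set Sm : Matrix (Fin l ⊕ Fin l) (Fin l ⊕ Fin l) ℝ := fromBlocks R1 0 0 R2 with hSmdef
  have hSmt : Smᵀ = Sm := by rw [hSmdef, fromBlocks_transpose, hR1t, hR2t, transpose_zero]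
  set Ynew : Matrix (Fin l ⊕ Fin l) (Fin l ⊕ Fin l) ℝ := Sm * Zb * Sm with hYnewdef
  have hYnewpsd : Ynew.PosSemidef := by
    have h9 := hZbpsd.mul_mul_conjTranspose_same Sm
    rwa [real_conjTranspose, hSmt] at h9
  have hYneweq : Ynew = fromBlocks M1 (R1 * G * R2) (R2 * Gᵀ * R1) M2 := by
    rw [hYnewdef, hZbeq, hSmdef, fromBlocks_multiply, fromBlocks_multiply]
    simp only [Matrix.zero_mul, Matrix.mul_zero, add_zero, zero_add, Matrix.mul_one,
      Matrix.one_mul]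
    rw [hR1sq, hR2sq]
  have hSmJ : Sm * J = Ub := by
    rw [hSmdef, hJdef, fromBlocks_mul_fromRows, hUbdef]
    simp
  have hJSm : Jᵀ * Sm = Ubᵀ := by
    rw [← hSmt, ← transpose_mul, hSmJ]
  have hYnewJ : Jᵀ * Ynew * J = M3 := by
    rw [hYnewdef]
    have h9 : Jᵀ * (Sm * Zb * Sm) * J = (Jᵀ * Sm) * Zb * (Sm * J) := by
      simp only [Matrix.mul_assoc]
    rw [h9, hJSm, hSmJ, hZbU]
  have hYnewrank : Ynew.rank ≤ phi l := by
    rw [hYnewdef]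
    calc (Sm * Zb * Sm).rank ≤ (Sm * Zb).rank := Matrix.rank_mul_le_left _ _
      _ ≤ Zb.rank := Matrix.rank_mul_le_right _ _
      _ = Yl.rank := by rw [hZbdef, Matrix.rank_submatrix]
      _ ≤ phi l := hYlrank
  -- assemble the 3l × 3l matrix
  set V : Matrix ((Fin l ⊕ Fin l) ⊕ Fin l) (Fin l ⊕ Fin l) ℝ := fromRows 1 Jᵀ with hVdef
  have hVt : Vᵀ = fromCols 1 J := by
    rw [hVdef, transpose_fromRows, transpose_one, transpose_transpose]
  set Xb' : Matrix ((Fin l ⊕ Fin l) ⊕ Fin l) ((Fin l ⊕ Fin l) ⊕ Fin l) ℝ :=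
    V * Ynew * Vᵀ with hXb'def
  have hXb'psd : Xb'.PosSemidef := by
    have h9 := hYnewpsd.mul_mul_conjTranspose_same V
    rwa [real_conjTranspose] at h9
  have hXb'eq : Xb' = fromBlocks Ynew (Ynew * J) (Jᵀ * Ynew) M3 := by
    rw [hXb'def, hVdef, hVt, fromRows_mul, fromRows_mul_fromCols]
    simp only [Matrix.one_mul, Matrix.mul_one]
    rw [hYnewJ]
  have hXb'rank : Xb'.rank ≤ phi l := by
    rw [hXb'def]
    calc (V * Ynew * Vᵀ).rank ≤ (V * Ynew).rank := Matrix.rank_mul_le_left _ _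
      _ ≤ Ynew.rank := Matrix.rank_mul_le_right _ _
      _ ≤ phi l := hYnewrank
  have hVW : Vᵀ * Wb = 0 := by
    rw [hVt, hWbdef, fromCols_mul_fromRows, Matrix.one_mul, Matrix.mul_neg, Matrix.mul_one]
    abel
  have hXb'W : Xb' * Wb = 0 := by
    rw [hXb'def, Matrix.mul_assoc, hVW, Matrix.mul_zero]
  refine ⟨Xb'.submatrix (eq3 l).symm (eq3 l).symm, ⟨?_, ?_, ?_, ?_, ?_⟩, ?_⟩
  · exact hXb'psd.submatrix _
  · intro i j
    rw [mk_e3_ll, mk_e3_ll]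
    simp only [submatrix_apply, Equiv.symm_apply_apply]
    rw [hXb'eq]
    simp only [fromBlocks_apply₁₁]
    rw [hYneweq]
    simp only [fromBlocks_apply₁₁]
  · intro i j
    rw [mk_e3_lr, mk_e3_lr]
    simp only [submatrix_apply, Equiv.symm_apply_apply]
    rw [hXb'eq]
    simp only [fromBlocks_apply₁₁]
    rw [hYneweq]
    simp only [fromBlocks_apply₂₂]
  · intro i j
    rw [mk_e3_r, mk_e3_r]
    simp only [submatrix_apply, Equiv.symm_apply_apply]
    rw [hXb'eq]
    simp only [fromBlocks_apply₂₂]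
  · have hWeq : (Wmat l) = Wb.submatrix ((eq3 l).symm) id := by
      rw [← hWbeq]; ext a j; simp
    rw [hWeq, conj_submatrix ((eq3 l).symm) Wb Xb']
    rw [Matrix.mul_assoc, hXb'W, Matrix.mul_zero]
  · rw [Matrix.rank_submatrix]
    exact hXb'rank
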